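/- For 1 ≤ p ≤ q < ∞ there exists a constant c(p,q) > 0 such that for every symmetric probability measure φ on a countable group G and every v > 0, one has c(p,q)·Λ_{p,φ}(v)^{q/p} ≤ Λ_{q,φ}(v) (a generalized Cheeger inequality between L^p and L^q isoperimetric profiles). -/

import Mathlib

open scoped BigOperators

/-- A symmetric probability measure on a group. -/
def IsSymProb {G : Type*} [Group G] (φ : G → ℝ) : Prop :=
  (∀ x, 0 ≤ φ x) ∧ (∑' x, φ x) = 1 ∧ ∀ x, φ x⁻¹ = φ x

/-- The `L^p` isoperimetric profile. -/
noncomputable def lambdaP {G : Type*} [Group G] (p : ℝ) (φ : G → ℝ) (v : ℝ) : ℝ :=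
  sInf {E : ℝ | ∃ f : G → ℝ, (Function.support f).Finite ∧
    ((Function.support f).ncard : ℝ) ≤ v ∧ (∑' x, |f x| ^ p) = 1 ∧
    E = (1 / 2) * ∑' x : G, ∑' y : G, |f (x * y) - f x| ^ p * φ y}

section Helpers

lemma real_rpow_two_bound {a b r : ℝ} (ha : 0 ≤ a) (hb : 0 ≤ b) (hr : 1 ≤ r) :
    (a + b) ^ r ≤ 2 ^ (r - 1) * (a ^ r + b ^ r) := by
  have h := NNReal.rpow_add_le_mul_rpow_add_rpow a.toNNReal b.toNNReal hr
  have := NNReal.coe_le_coe.2 h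
  push_cast [NNReal.coe_rpow, Real.coe_toNNReal _ ha, Real.coe_toNNReal _ hb] at this
  convert this using 2

lemma abs_rpow_sub_rpow_le {s : ℝ} (hs : 1 ≤ s) (a b : ℝ) :
    |(|a| ^ s) - |b| ^ s| ≤ s * |a - b| * (|a| + |b|) ^ (s - 1) := by
  have hs0 : (0:ℝ) ≤ s := zero_le_one.trans hs
  have key : ∀ A B : ℝ, 0 ≤ B → B ≤ A → A ^ s - B ^ s ≤ s * (A - B) * A ^ (s - 1) := by
    intro A B hB hBA
    have hA : 0 ≤ A := hB.trans hBA
    rcases eq_or_lt_of_le hA with h0 | hApos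
    · have hB0 : B = 0 := le_antisymm (hBA.trans h0.ge) hB
      rw [← h0, hB0, Real.zero_rpow (by linarith : s ≠ 0)]
      simp
    · have hdiv : (0:ℝ) ≤ B / A := div_nonneg hB hApos.le
      have hbern := one_add_mul_self_le_rpow_one_add (s := B / A - 1) (by linarith) hs
      rw [add_sub_cancel] at hbern
      have h2 : A ^ s * (1 + s * (B / A - 1)) ≤ A ^ s * (B / A) ^ s :=
        mul_le_mul_of_nonneg_left hbern (Real.rpow_nonneg hApos.le s)
      rw [Real.div_rpow hB hApos.le,
        mul_div_cancel₀ _ (ne_of_gt (Real.rpow_pos_of_pos hApos s))] at h2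
      have hA1 : A ^ (s - 1) * A = A ^ s := by
        rw [Real.rpow_sub_one hApos.ne']; field_simp
      have h3 : A ^ s * (B / A) = A ^ (s - 1) * B := by
        rw [← hA1]; field_simp
      nlinarith [h2, h3, hA1]
  have main : ∀ a b : ℝ, |b| ≤ |a| →
      |(|a| ^ s) - |b| ^ s| ≤ s * |a - b| * (|a| + |b|) ^ (s - 1) := by
    intro a b h
    rw [abs_of_nonneg (sub_nonneg.2 (Real.rpow_le_rpow (abs_nonneg b) h hs0))]
    calc |a| ^ s - |b| ^ s ≤ s * (|a| - |b|) * |a| ^ (s - 1) := key _ _ (abs_nonneg b) h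
      _ ≤ s * |a - b| * (|a| + |b|) ^ (s - 1) := by
          apply mul_le_mul
          · exact mul_le_mul_of_nonneg_left (abs_sub_abs_le_abs_sub a b) hs0
          · exact Real.rpow_le_rpow (abs_nonneg a) (le_add_of_nonneg_right (abs_nonneg b))
              (by linarith)
          · positivity
          · positivity
  rcases le_total |b| |a| with h | h
  · exact main a b h
  · have := main b a h
    rwa [abs_sub_comm, abs_sub_comm b a, add_comm (|b|) (|a|)] at this

lemma support_abs_rpow {α : Type*} (f : α → ℝ) {e : ℝ} (he : e ≠ 0) :
    Function.support (fun x => |f x| ^ e) = Function.support f := by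
  ext x
  simp only [Function.mem_support, ne_eq]
  rw [Real.rpow_eq_zero (abs_nonneg _) he, abs_eq_zero]

lemma tsum_abs_rpow_rpow {α : Type*} (f : α → ℝ) (e r : ℝ) :
    ∑' x, |(|f x| ^ e)| ^ r = ∑' x, |f x| ^ (e * r) :=
  tsum_congr fun x => by
    rw [abs_of_nonneg (Real.rpow_nonneg (abs_nonneg _) e), ← Real.rpow_mul (abs_nonneg _)]

variable {G : Type*} [Group G] {φ : G → ℝ}

lemma trans_sum (hφ0 : ∀ x, 0 ≤ φ x) (hφs : Summable φ)
    (F : G → ℝ) (hF0 : ∀ z, 0 ≤ F z) (S : Finset G) (hS : ∀ z ∉ S, F z = 0) :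
    (∀ x : G, Summable fun y => F (x * y) * φ y) ∧
    (∀ x : G, ∑' y, F (x * y) * φ y = ∑ t ∈ S, F t * φ (x⁻¹ * t)) ∧
    Summable (fun x : G => ∑' y, F (x * y) * φ y) ∧
    (∑' x : G, ∑' y, F (x * y) * φ y = (∑ t ∈ S, F t) * ∑' z, φ z) := by
  classical
  have key : ∀ x y : G, F (x * y) * φ y = ∑ t ∈ S, (if x * y = t then F t * φ y else 0) := by
    intro x y
    rw [Finset.sum_ite_eq]
    split
    · rfl
    · rw [hS _ (by assumption), zero_mul]
  have sumt : ∀ (x t : G), Summable fun y => if x * y = t then F t * φ y else 0 := by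
    intro x t
    refine Summable.of_nonneg_of_le (fun y => ?_) (fun y => ?_) (hφs.mul_left (F t))
    · split
      · exact mul_nonneg (hF0 t) (hφ0 y)
      · exact le_rfl
    · split
      · exact le_rfl
      · exact mul_nonneg (hF0 t) (hφ0 y)
  have hsum1 : ∀ x : G, Summable fun y => F (x * y) * φ y := by
    intro x
    exact (summable_congr (key x)).2 (summable_sum fun t _ => sumt x t)
  have hval : ∀ x : G, ∑' y, F (x * y) * φ y = ∑ t ∈ S, F t * φ (x⁻¹ * t) := by
    intro x
    rw [tsum_congr (key x), Summable.tsum_finsetSum fun t _ => sumt x t]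
    refine Finset.sum_congr rfl fun t _ => ?_
    rw [tsum_eq_single (x⁻¹ * t) ?_]
    · simp
    · intro y hy
      rw [if_neg]
      intro hxy
      exact hy (by rw [← hxy]; group)
  have hsummable_each : ∀ t : G, Summable fun x : G => φ (x⁻¹ * t) := fun t =>
    ((Equiv.inv G).trans (Equiv.mulRight t)).summable_iff.2 hφs
  have houter : Summable (fun x : G => ∑' y, F (x * y) * φ y) :=
    (summable_congr hval).2 (summable_sum fun t _ => (hsummable_each t).mul_left (F t))
  refine ⟨hsum1, hval, houter, ?_⟩
  rw [tsum_congr hval, Summable.tsum_finsetSum fun t _ => (hsummable_each t).mul_left (F t), Finset.sum_mul]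
  refine Finset.sum_congr rfl fun t _ => ?_
  rw [tsum_mul_left]
  congr 1
  exact ((Equiv.inv G).trans (Equiv.mulRight t)).tsum_eq φ

lemma energy_facts (hφ0 : ∀ x, 0 ≤ φ x) (hφs : Summable φ) (hφ1 : ∑' x, φ x = 1)
    (f : G → ℝ) (hf : (Function.support f).Finite) {r : ℝ} (hr : 1 ≤ r) :
    Summable (fun z : G × G => |f (z.1 * z.2) - f z.1| ^ r * φ z.2) ∧
    (∀ x : G, Summable fun y => |f (x * y) - f x| ^ r * φ y) ∧
    Summable (fun z : G × G => (|f (z.1 * z.2)| + |f z.1|) ^ r * φ z.2) ∧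
    ((∑' z : G × G, (|f (z.1 * z.2)| + |f z.1|) ^ r * φ z.2) ≤ 2 ^ r * ∑' x, |f x| ^ r) ∧
    ((∑' z : G × G, |f (z.1 * z.2) - f z.1| ^ r * φ z.2) =
      ∑' x : G, ∑' y : G, |f (x * y) - f x| ^ r * φ y) := by
  classical
  have hr0 : (0:ℝ) ≤ r := zero_le_one.trans hr
  have hrne : r ≠ 0 := by linarith
  set S : Finset G := hf.toFinset with hSdef
  set Fr : G → ℝ := fun z => |f z| ^ r with hFrdef
  have hFr0 : ∀ z, 0 ≤ Fr z := fun z => Real.rpow_nonneg (abs_nonneg _) r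
  have hFrS : ∀ z ∉ S, Fr z = 0 := by
    intro z hz
    have : f z = 0 := by
      by_contra h
      exact hz (hf.mem_toFinset.2 h)
    simp [hFrdef, this, Real.zero_rpow hrne]
  obtain ⟨h1, h2, h3, h4⟩ := trans_sum hφ0 hφs Fr hFr0 S hFrS
  have hFrsum : Summable Fr := summable_of_ne_finset_zero hFrS
  have hFrtsum : ∑' z, Fr z = ∑ t ∈ S, Fr t := tsum_eq_sum hFrS
  have Wpoint : ∀ x y : G, (|f (x * y)| + |f x|) ^ r * φ y
      ≤ 2 ^ (r - 1) * (Fr (x * y) * φ y + Fr x * φ y) := by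
    intro x y
    have h := real_rpow_two_bound (abs_nonneg (f (x*y))) (abs_nonneg (f x)) hr
    have := mul_le_mul_of_nonneg_right h (hφ0 y)
    calc (|f (x * y)| + |f x|) ^ r * φ y
        ≤ 2 ^ (r - 1) * (|f (x * y)| ^ r + |f x| ^ r) * φ y := this
      _ = 2 ^ (r - 1) * (Fr (x * y) * φ y + Fr x * φ y) := by simp [hFrdef]; ring
  have Dpoint : ∀ x y : G, |f (x * y) - f x| ^ r * φ y
      ≤ (|f (x * y)| + |f x|) ^ r * φ y := by
    intro x y
    exact mul_le_mul_of_nonneg_right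
      (Real.rpow_le_rpow (abs_nonneg _) (abs_sub _ _) hr0) (hφ0 y)
  have hRHSinner : ∀ x : G, Summable fun y => 2 ^ (r - 1) * (Fr (x * y) * φ y + Fr x * φ y) :=
    fun x => ((h1 x).add (hφs.mul_left (Fr x))).mul_left _
  have Wsum_inner : ∀ x : G, Summable fun y => (|f (x * y)| + |f x|) ^ r * φ y := by
    intro x
    refine Summable.of_nonneg_of_le
      (fun y => mul_nonneg (Real.rpow_nonneg (by positivity) r) (hφ0 _)) (Wpoint x) (hRHSinner x)
  have Dsum_inner : ∀ x : G, Summable fun y => |f (x * y) - f x| ^ r * φ y := by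
    intro x
    refine Summable.of_nonneg_of_le
      (fun y => mul_nonneg (Real.rpow_nonneg (by positivity) r) (hφ0 _)) (Dpoint x) (Wsum_inner x)
  have hWx : ∀ x : G, ∑' y, (|f (x * y)| + |f x|) ^ r * φ y
      ≤ 2 ^ (r - 1) * ((∑' y, Fr (x * y) * φ y) + Fr x) := by
    intro x
    calc ∑' y, (|f (x * y)| + |f x|) ^ r * φ y
        ≤ ∑' y, 2 ^ (r - 1) * (Fr (x * y) * φ y + Fr x * φ y) :=
          Summable.tsum_le_tsum (Wpoint x) (Wsum_inner x) (hRHSinner x)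
      _ = 2 ^ (r - 1) * ((∑' y, Fr (x * y) * φ y) + Fr x) := by
          rw [tsum_mul_left, Summable.tsum_add (h1 x) (hφs.mul_left (Fr x)), tsum_mul_left, hφ1, mul_one]
  have hDx : ∀ x : G, ∑' y, |f (x * y) - f x| ^ r * φ y
      ≤ 2 ^ (r - 1) * ((∑' y, Fr (x * y) * φ y) + Fr x) :=
    fun x => le_trans (Summable.tsum_le_tsum (Dpoint x) (Dsum_inner x) (Wsum_inner x)) (hWx x)
  have hRHSouter : Summable fun x : G => 2 ^ (r - 1) * ((∑' y, Fr (x * y) * φ y) + Fr x) :=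
    (h3.add hFrsum).mul_left _
  have Wsum_outer : Summable fun x : G => ∑' y, (|f (x * y)| + |f x|) ^ r * φ y :=
    Summable.of_nonneg_of_le
      (fun x => tsum_nonneg fun y => mul_nonneg (Real.rpow_nonneg (by positivity) r) (hφ0 _))
      hWx hRHSouter
  have Dsum_outer : Summable fun x : G => ∑' y, |f (x * y) - f x| ^ r * φ y :=
    Summable.of_nonneg_of_le
      (fun x => tsum_nonneg fun y => mul_nonneg (Real.rpow_nonneg (by positivity) r) (hφ0 _))
      hDx hRHSouter
  have Wpair : Summable (fun z : G × G => (|f (z.1 * z.2)| + |f z.1|) ^ r * φ z.2) :=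
    (summable_prod_of_nonneg
      (fun z => mul_nonneg (Real.rpow_nonneg (by positivity) r) (hφ0 _))).2
      ⟨Wsum_inner, Wsum_outer⟩
  have Dpair : Summable (fun z : G × G => |f (z.1 * z.2) - f z.1| ^ r * φ z.2) :=
    (summable_prod_of_nonneg
      (fun z => mul_nonneg (Real.rpow_nonneg (by positivity) r) (hφ0 _))).2
      ⟨Dsum_inner, Dsum_outer⟩
  refine ⟨Dpair, Dsum_inner, Wpair, ?_, Summable.tsum_prod' Dpair Dsum_inner⟩
  calc ∑' z : G × G, (|f (z.1 * z.2)| + |f z.1|) ^ r * φ z.2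
      = ∑' x : G, ∑' y : G, (|f (x * y)| + |f x|) ^ r * φ y := Summable.tsum_prod' Wpair Wsum_inner
    _ ≤ ∑' x : G, 2 ^ (r - 1) * ((∑' y, Fr (x * y) * φ y) + Fr x) :=
        Summable.tsum_le_tsum hWx Wsum_outer hRHSouter
    _ = 2 ^ (r - 1) * ((∑' x : G, ∑' y, Fr (x * y) * φ y) + ∑' x, Fr x) := by
        rw [tsum_mul_left, Summable.tsum_add h3 hFrsum]
    _ = 2 ^ (r - 1) * ((∑ t ∈ S, Fr t) * 1 + ∑' x, Fr x) := by rw [h4, hφ1]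
    _ = 2 ^ (r - 1) * 2 * ∑' x, Fr x := by rw [mul_one, ← hFrtsum]; ring
    _ = 2 ^ r * ∑' x, |f x| ^ r := by
        congr 1
        rw [Real.rpow_sub_one (by norm_num : (2:ℝ) ≠ 0)]
        field_simp

end Helpers

/-- Generalized Cheeger inequality: for `1 ≤ p ≤ q < ∞` there is `c(p,q) > 0` such that
for every symmetric probability measure `φ` on a countable group `G` and every `v > 0`,
`c(p,q)·Λ_{p,φ}(v)^{q/p} ≤ Λ_{q,φ}(v)`. -/
theorem cheeger_pq (p q : ℝ) (hp : 1 ≤ p) (hpq : p ≤ q) :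
    ∃ c > (0 : ℝ), ∀ (G : Type) [Group G] [Countable G] (φ : G → ℝ), IsSymProb φ →
      ∀ v > (0 : ℝ), c * lambdaP p φ v ^ (q / p) ≤ lambdaP q φ v := by
  have hp0 : (0:ℝ) < p := lt_of_lt_of_le one_pos hp
  rcases eq_or_lt_of_le hpq with rfl | hlt
  · refine ⟨1, one_pos, ?_⟩
    intro G _ _ φ hφ v hv
    rw [div_self hp0.ne', Real.rpow_one, one_mul]
  · have hq0 : (0:ℝ) < q := hp0.trans hlt
    have hq1 : (1:ℝ) ≤ q := hp.trans hpq
    have hqp0 : (0:ℝ) < q - p := sub_pos.2 hlt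
    set s : ℝ := q / p with hsdef
    have hs1 : 1 < s := (one_lt_div hp0).2 hlt
    have hs : (1:ℝ) ≤ s := hs1.le
    have hs0 : (0:ℝ) < s := lt_trans one_pos hs1
    set K : ℝ := s ^ p * 2 ^ (p / q) * 2 ^ (q - p) / 2 with hKdef
    have hK : 0 < K := by
      rw [hKdef]
      have h1 : (0:ℝ) < s ^ p := Real.rpow_pos_of_pos hs0 p
      have h2 : (0:ℝ) < (2:ℝ) ^ (p / q) := Real.rpow_pos_of_pos two_pos _
      have h3 : (0:ℝ) < (2:ℝ) ^ (q - p) := Real.rpow_pos_of_pos two_pos _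
      positivity
    have hKq : (0:ℝ) < K ^ (q / p) := Real.rpow_pos_of_pos hK _
    refine ⟨(K ^ (q / p))⁻¹, inv_pos.2 hKq, ?_⟩
    intro G _ _ φ hφ v hv
    obtain ⟨hφ0, hφ1, -⟩ := hφ
    have hφs : Summable φ := by
      by_contra h
      rw [tsum_eq_zero_of_not_summable h] at hφ1
      norm_num at hφ1
    set Sp : Set ℝ := {E : ℝ | ∃ f : G → ℝ, (Function.support f).Finite ∧
      ((Function.support f).ncard : ℝ) ≤ v ∧ (∑' x, |f x| ^ p) = 1 ∧
      E = (1 / 2) * ∑' x : G, ∑' y : G, |f (x * y) - f x| ^ p * φ y} with hSpdef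
    set Sq : Set ℝ := {E : ℝ | ∃ f : G → ℝ, (Function.support f).Finite ∧
      ((Function.support f).ncard : ℝ) ≤ v ∧ (∑' x, |f x| ^ q) = 1 ∧
      E = (1 / 2) * ∑' x : G, ∑' y : G, |f (x * y) - f x| ^ q * φ y} with hSqdef
    have hlp : lambdaP p φ v = sInf Sp := rfl
    have hlq : lambdaP q φ v = sInf Sq := rfl
    have hSp_nonneg : ∀ E ∈ Sp, 0 ≤ E := by
      rintro E ⟨f, -, -, -, rfl⟩
      exact mul_nonneg (by norm_num) (tsum_nonneg fun x => tsum_nonneg fun y =>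
        mul_nonneg (Real.rpow_nonneg (abs_nonneg _) p) (hφ0 y))
    have hSq_nonneg : ∀ E ∈ Sq, 0 ≤ E := by
      rintro E ⟨f, -, -, -, rfl⟩
      exact mul_nonneg (by norm_num) (tsum_nonneg fun x => tsum_nonneg fun y =>
        mul_nonneg (Real.rpow_nonneg (abs_nonneg _) q) (hφ0 y))
    rcases Set.eq_empty_or_nonempty Sq with hSqE | hSqne
    · have hSpE : Sp = ∅ := by
        rw [Set.eq_empty_iff_forall_notMem]
        rintro E ⟨f, hfin, hcard, hnorm, -⟩
        have hmemq : ((1:ℝ) / 2 * ∑' x : G, ∑' y : G,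
            |(fun z => |f z| ^ (p / q)) (x * y) - (fun z => |f z| ^ (p / q)) x| ^ q * φ y) ∈ Sq := by
          refine ⟨fun z => |f z| ^ (p / q), ?_, ?_, ?_, rfl⟩
          · rw [support_abs_rpow f (div_pos hp0 hq0).ne']; exact hfin
          · rw [support_abs_rpow f (div_pos hp0 hq0).ne']; exact hcard
          · rw [tsum_abs_rpow_rpow f (p / q) q, div_mul_cancel₀ _ hq0.ne']
            exact hnorm
        rw [hSqE] at hmemq
        exact hmemq
      rw [hlp, hlq, hSpE, hSqE, Real.sInf_empty,
        Real.zero_rpow (div_pos hq0 hp0).ne', mul_zero]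
    · have hBp : BddBelow Sp := ⟨0, fun E hE => hSp_nonneg E hE⟩
      have hlp0 : 0 ≤ lambdaP p φ v := by
        rw [hlp]; exact Real.sInf_nonneg hSp_nonneg
      have key : ∀ E ∈ Sq, lambdaP p φ v ≤ K * E ^ (p / q) := by
        rintro E ⟨f, hfin, hcard, hnorm, hE⟩
        obtain ⟨Dq_pair, Dq_inner, Wq_pair, Wq_bound, Dq_eq⟩ :=
          energy_facts hφ0 hφs hφ1 f hfin hq1
        set g : G → ℝ := fun x => |f x| ^ s with hgdef
        have hgsupp : Function.support g = Function.support f := support_abs_rpow f hs0.ne'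
        have hgfin : (Function.support g).Finite := by rw [hgsupp]; exact hfin
        have hgnorm : (∑' x, |g x| ^ p) = 1 := by
          rw [hgdef, tsum_abs_rpow_rpow f s p, hsdef, div_mul_cancel₀ _ hp0.ne']
          exact hnorm
        obtain ⟨Dp_pair, Dp_inner, -, -, Dp_eq⟩ := energy_facts hφ0 hφs hφ1 g hgfin hp
        set u : G × G → ℝ := fun z => |f (z.1 * z.2) - f z.1| ^ p * φ z.2 ^ (p / q) with hudef
        set w : G × G → ℝ :=
          fun z => (|f (z.1 * z.2)| + |f z.1|) ^ (q - p) * φ z.2 ^ ((q - p) / q) with hwdef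
        have hu0 : ∀ z, 0 ≤ u z := fun z =>
          mul_nonneg (Real.rpow_nonneg (abs_nonneg _) _) (Real.rpow_nonneg (hφ0 _) _)
        have hw0 : ∀ z, 0 ≤ w z := fun z =>
          mul_nonneg (Real.rpow_nonneg (by positivity) _) (Real.rpow_nonneg (hφ0 _) _)
        have hua : ∀ z : G × G, u z ^ (q / p) = |f (z.1 * z.2) - f z.1| ^ q * φ z.2 := by
          intro z
          simp only [hudef]
          rw [Real.mul_rpow (Real.rpow_nonneg (abs_nonneg _) _) (Real.rpow_nonneg (hφ0 _) _),
            ← Real.rpow_mul (abs_nonneg _), ← Real.rpow_mul (hφ0 _),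
            show p * (q / p) = q by field_simp,
            show (p / q) * (q / p) = 1 by field_simp, Real.rpow_one]
        have hwb : ∀ z : G × G,
            w z ^ (q / (q - p)) = (|f (z.1 * z.2)| + |f z.1|) ^ q * φ z.2 := by
          intro z
          simp only [hwdef]
          rw [Real.mul_rpow (Real.rpow_nonneg (by positivity) _) (Real.rpow_nonneg (hφ0 _) _),
            ← Real.rpow_mul (by positivity), ← Real.rpow_mul (hφ0 _),
            show (q - p) * (q / (q - p)) = q by field_simp,
            show ((q - p) / q) * (q / (q - p)) = 1 by field_simp, Real.rpow_one]
        have hconj : (q / p).HolderConjugate (q / (q - p)) := by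
          constructor
          · rw [inv_div, inv_div, ← add_div,
              show p + (q - p) = q from by ring, div_self hq0.ne', inv_one]
          · exact div_pos hq0 hp0
          · exact div_pos hq0 hqp0
        have hsum_ua : Summable fun z : G × G => u z ^ (q / p) :=
          (summable_congr hua).2 Dq_pair
        have hsum_wb : Summable fun z : G × G => w z ^ (q / (q - p)) :=
          (summable_congr hwb).2 Wq_pair
        have Hold := Real.inner_le_Lp_mul_Lq_tsum_of_nonneg hconj hu0 hw0 hsum_ua hsum_wb
        have huw_sum := Real.summable_mul_of_Lp_Lq_of_nonneg hconj hu0 hw0 hsum_ua hsum_wb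
        have hE0 : 0 ≤ E := hSq_nonneg E ⟨f, hfin, hcard, hnorm, hE⟩
        have hAval : ∑' z : G × G, u z ^ (q / p) = 2 * E := by
          rw [tsum_congr hua, Dq_eq, hE]; ring
        have hBnn : 0 ≤ ∑' z : G × G, w z ^ (q / (q - p)) :=
          tsum_nonneg fun z => Real.rpow_nonneg (hw0 z) _
        have hBval : ∑' z : G × G, w z ^ (q / (q - p)) ≤ 2 ^ q := by
          calc ∑' z : G × G, w z ^ (q / (q - p))
              = ∑' z : G × G, (|f (z.1 * z.2)| + |f z.1|) ^ q * φ z.2 := tsum_congr hwb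
            _ ≤ 2 ^ q * ∑' x, |f x| ^ q := Wq_bound
            _ = 2 ^ q := by rw [hnorm, mul_one]
        have h2q : ((2:ℝ) ^ q) ^ ((q - p) / q) = 2 ^ (q - p) := by
          rw [← Real.rpow_mul (by norm_num : (0:ℝ) ≤ 2)]
          congr 1
          field_simp
        have hHold2 : ∑' z : G × G, u z * w z ≤ (2 * E) ^ (p / q) * 2 ^ (q - p) := by
          refine le_trans Hold ?_
          rw [one_div_div, one_div_div, hAval]
          refine mul_le_mul_of_nonneg_left ?_ (Real.rpow_nonneg (by positivity) _)
          exact (Real.rpow_le_rpow hBnn hBval (by positivity)).trans_eq h2q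
        have hpt : ∀ z : G × G,
            |g (z.1 * z.2) - g z.1| ^ p * φ z.2 ≤ s ^ p * (u z * w z) := by
          intro z
          have habs := abs_rpow_sub_rpow_le hs (f (z.1 * z.2)) (f z.1)
          have h1 : |g (z.1 * z.2) - g z.1| ≤
              s * |f (z.1 * z.2) - f z.1| * (|f (z.1 * z.2)| + |f z.1|) ^ (s - 1) := by
            simp only [hgdef]
            exact habs
          have h2 : |g (z.1 * z.2) - g z.1| ^ p ≤
              (s * |f (z.1 * z.2) - f z.1| * (|f (z.1 * z.2)| + |f z.1|) ^ (s - 1)) ^ p :=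
            Real.rpow_le_rpow (abs_nonneg _) h1 hp0.le
          have h3 : (s * |f (z.1 * z.2) - f z.1| * (|f (z.1 * z.2)| + |f z.1|) ^ (s - 1)) ^ p
              = s ^ p * |f (z.1 * z.2) - f z.1| ^ p *
                (|f (z.1 * z.2)| + |f z.1|) ^ ((s - 1) * p) := by
            rw [Real.mul_rpow (mul_nonneg hs0.le (abs_nonneg _))
                (Real.rpow_nonneg (by positivity) _),
              Real.mul_rpow hs0.le (abs_nonneg _), ← Real.rpow_mul (by positivity)]
          have hsp : (s - 1) * p = q - p := by
            rw [hsdef]; field_simp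
          have hexp1 : p / q + (q - p) / q = 1 := by
            rw [← add_div, show p + (q - p) = q from by ring, div_self hq0.ne']
          have hφsplit : φ z.2 ^ (p / q) * φ z.2 ^ ((q - p) / q) = φ z.2 := by
            rw [← Real.rpow_add' (hφ0 _) (by rw [hexp1]; norm_num), hexp1, Real.rpow_one]
          have huw : u z * w z = |f (z.1 * z.2) - f z.1| ^ p *
              (|f (z.1 * z.2)| + |f z.1|) ^ (q - p) * φ z.2 := by
            simp only [hudef, hwdef]
            calc |f (z.1 * z.2) - f z.1| ^ p * φ z.2 ^ (p / q) *
                  ((|f (z.1 * z.2)| + |f z.1|) ^ (q - p) * φ z.2 ^ ((q - p) / q))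
                = |f (z.1 * z.2) - f z.1| ^ p * (|f (z.1 * z.2)| + |f z.1|) ^ (q - p) *
                  (φ z.2 ^ (p / q) * φ z.2 ^ ((q - p) / q)) := by ring
              _ = _ := by rw [hφsplit]
          calc |g (z.1 * z.2) - g z.1| ^ p * φ z.2
              ≤ (s ^ p * |f (z.1 * z.2) - f z.1| ^ p *
                  (|f (z.1 * z.2)| + |f z.1|) ^ (q - p)) * φ z.2 := by
                refine mul_le_mul_of_nonneg_right ?_ (hφ0 _)
                rw [← hsp]
                exact h2.trans_eq h3
            _ = s ^ p * (u z * w z) := by rw [huw]; ring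
        have hchain : (∑' x : G, ∑' y : G, |g (x * y) - g x| ^ p * φ y)
            ≤ s ^ p * ((2 * E) ^ (p / q) * 2 ^ (q - p)) := by
          calc (∑' x : G, ∑' y : G, |g (x * y) - g x| ^ p * φ y)
              = ∑' z : G × G, |g (z.1 * z.2) - g z.1| ^ p * φ z.2 := Dp_eq.symm
            _ ≤ ∑' z : G × G, s ^ p * (u z * w z) :=
                Summable.tsum_le_tsum hpt Dp_pair (huw_sum.mul_left _)
            _ = s ^ p * ∑' z : G × G, u z * w z := tsum_mul_left
            _ ≤ s ^ p * ((2 * E) ^ (p / q) * 2 ^ (q - p)) :=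
                mul_le_mul_of_nonneg_left hHold2 (Real.rpow_nonneg hs0.le _)
        have hmem : ((1:ℝ) / 2) * (∑' x : G, ∑' y : G, |g (x * y) - g x| ^ p * φ y) ∈ Sp := by
          refine ⟨g, hgfin, ?_, hgnorm, rfl⟩
          rw [hgsupp]
          exact hcard
        have hle : lambdaP p φ v ≤
            ((1:ℝ) / 2) * (∑' x : G, ∑' y : G, |g (x * y) - g x| ^ p * φ y) := by
          rw [hlp]
          exact csInf_le hBp hmem
        calc lambdaP p φ v
            ≤ ((1:ℝ) / 2) * (∑' x : G, ∑' y : G, |g (x * y) - g x| ^ p * φ y) := hle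
          _ ≤ ((1:ℝ) / 2) * (s ^ p * ((2 * E) ^ (p / q) * 2 ^ (q - p))) :=
              mul_le_mul_of_nonneg_left hchain (by norm_num)
          _ = K * E ^ (p / q) := by
              rw [Real.mul_rpow (by norm_num) hE0, hKdef]
              ring
      rw [hlq]
      refine le_csInf hSqne ?_
      intro E hEmem
      have hE0 : 0 ≤ E := hSq_nonneg E hEmem
      have h2 := Real.rpow_le_rpow hlp0 (key E hEmem) (by positivity : (0:ℝ) ≤ q / p)
      rw [Real.mul_rpow hK.le (Real.rpow_nonneg hE0 _), ← Real.rpow_mul hE0,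
        show (p / q) * (q / p) = 1 by field_simp, Real.rpow_one] at h2
      calc (K ^ (q / p))⁻¹ * lambdaP p φ v ^ (q / p)
          ≤ (K ^ (q / p))⁻¹ * (K ^ (q / p) * E) :=
            mul_le_mul_of_nonneg_left h2 (by positivity)
        _ = E := by
            rw [← mul_assoc, inv_mul_cancel₀ hKq.ne', one_mul]
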